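/- Let γ ∈ ℂ[x₁,x₂,x₃] be a polynomial satisfying λ₁·γ(λ₂, λ₃, λ₁+λ₄) = λ₂·γ(λ₁, λ₃, λ₂+λ₄) as an identity in the four independent variables λ₁, λ₂, λ₃, λ₄. Suppose in addition that γ is skew-symmetric in its last two arguments, i.e. γ(x₁,x₂,x₃) = −γ(x₁,x₃,x₂). Then γ = 0. -/
import Mathlib

open MvPolynomial

lemma eval_aeval_aux (γ : MvPolynomial (Fin 3) ℂ) (x : Fin 4 → ℂ)
    (f : Fin 3 → MvPolynomial (Fin 4) ℂ) :
    eval x (aeval f γ) = eval (fun i => eval x (f i)) γ := by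
  rw [map_aeval]
  rw [show eval (fun i => eval x (f i)) γ = aeval (fun i => eval x (f i)) γ from rfl]
  rw [aeval_eq_eval₂Hom]
  apply eval₂Hom_congr
  · ext r; simp
  · rfl
  · rfl

/-- If λ₁·γ(λ₂,λ₃,λ₁+λ₄) = λ₂·γ(λ₁,λ₃,λ₂+λ₄) and γ is skew-symmetric in its last two
    arguments, then γ = 0. -/
theorem stmt_13 (γ : MvPolynomial (Fin 3) ℂ)
    (h : X 0 * (aeval ![(X 1 : MvPolynomial (Fin 4) ℂ), X 2, X 0 + X 3] γ)
        = X 1 * (aeval ![(X 0 : MvPolynomial (Fin 4) ℂ), X 2, X 1 + X 3] γ))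
    (hskew : rename (Equiv.swap (1 : Fin 3) 2) γ = -γ) :
    γ = 0 := by
  -- functional version of h
  have key : ∀ a b c d : ℂ, a * eval ![b, c, a + d] γ = b * eval ![a, c, b + d] γ := by
    intro a b c d
    have h2 := congrArg (eval ![a, b, c, d]) h
    rw [map_mul, map_mul, eval_aeval_aux, eval_aeval_aux] at h2
    have e1 : (fun i => eval ![a,b,c,d] (![(X 1 : MvPolynomial (Fin 4) ℂ), X 2, X 0 + X 3] i))
        = ![b, c, a + d] := by
      funext i; fin_cases i <;> simp
    have e2 : (fun i => eval ![a,b,c,d] (![(X 0 : MvPolynomial (Fin 4) ℂ), X 2, X 1 + X 3] i))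
        = ![a, c, b + d] := by
      funext i; fin_cases i <;> simp
    rw [e1, e2] at h2
    simpa using h2
  -- functional version of skew symmetry
  have sk : ∀ a b c : ℂ, eval ![a, b, c] γ = - eval ![a, c, b] γ := by
    intro a b c
    have h2 := congrArg (eval ![a, c, b]) hskew
    rw [eval_rename, map_neg] at h2
    have e : (![a, c, b] ∘ (Equiv.swap (1 : Fin 3) 2)) = ![a, b, c] := by
      funext i; fin_cases i <;> simp [Equiv.swap_apply_def]
    rw [e] at h2
    exact h2
  -- γ vanishes on the diagonal in last two args
  have gyy : ∀ x y : ℂ, eval ![x, y, y] γ = 0 := by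
    intro x y
    have := sk x y y
    linear_combination this / 2
  -- reduction: g(x,y,z) = x * g(1,y,x+z-1)
  have rel : ∀ x y z : ℂ, eval ![x, y, z] γ = x * eval ![1, y, x + z - 1] γ := by
    intro x y z
    have := key 1 x y (z - 1)
    rw [show (1:ℂ) + (z - 1) = z by ring, show x + (z - 1) = x + z - 1 by ring] at this
    linear_combination this
  -- g(1,c,w) = 0 for w ≠ c - 1
  have g1 : ∀ c w : ℂ, w ≠ c - 1 → eval ![1, c, w] γ = 0 := by
    intro c w hw
    have hx : w - c + 1 ≠ 0 := by
      intro h0; exact hw (by linear_combination h0)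
    have := rel (w - c + 1) c c
    rw [gyy] at this
    rw [show w - c + 1 + c - 1 = w by ring] at this
    rcases mul_eq_zero.mp this.symm with h' | h'
    · exact absurd h' hx
    · exact h'
  -- g(1,c,w) = 0 always
  have g1all : ∀ c w : ℂ, eval ![1, c, w] γ = 0 := by
    intro c w
    by_cases hw : w = c - 1
    · subst hw
      have hne : c ≠ c - 1 - 1 := by
        intro h0
        have h2 : (0:ℂ) = 2 := by linear_combination -h0
        exact absurd h2 (by norm_num)
      rw [sk 1 c (c - 1), g1 (c - 1) c hne, neg_zero]
    · exact g1 c w hw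
  -- conclude
  apply MvPolynomial.funext
  intro x
  have hx : x = ![x 0, x 1, x 2] := by
    funext i; fin_cases i <;> rfl
  rw [map_zero, hx, rel, g1all, mul_zero]
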